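/- arXiv:1309.1661 — 4 statements merged into one kernel-verified Lean document; each statement's English description precedes it below -/
import Mathlib

section
/- Let ℓ be a prime number, G a finite group whose order is not divisible by ℓ, and C_ℓ = ℤ/ℓℤ. Let N be a module over ℤ[1/ℓ][C_ℓ × G] whose underlying ℤ[G]-module is cohomologically trivial. Then the submodule N^{C_ℓ} of C_ℓ-invariants is cohomologically trivial as a ℤ[G]-module. -/
open CategoryTheory

section InvariantsRep

variable {R : Type} [CommSemiring R] {H G : Type} [Group H] [Group G]
variable {V : Type} [AddCommMonoid V] [Module R V]

/-- The submodule of `H`-invariants of a representation of a product group `H × G`. -/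
noncomputable def fstInvariants (ρ : Representation R (H × G) V) : Submodule R V :=
  { carrier := Set.ofPred fun v => ∀ h : H, (MonoidHom.comp ρ (MonoidHom.inl H G)) h v = v
    zero_mem' := fun h => by simp only [map_zero]
    add_mem' := fun hv hw h => by simp only [hv h, hw h, map_add]
    smul_mem' := fun r v hv h => by simp only [hv h, map_smulₛₗ, RingHom.id_apply] }

lemma fstInvariants_stable (ρ : Representation R (H × G) V) (g : G) :
    ∀ v ∈ fstInvariants ρ, ρ (1, g) v ∈ fstInvariants ρ := by
  intro v hv h
  have h1 : ρ (h, 1) v = v := hv h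
  have h2 : ((h, (1 : G)) : H × G) * ((1 : H), g) = ((1 : H), g) * (h, 1) := by
    simp [Prod.ext_iff]
  show ρ (h, 1) (ρ (1, g) v) = ρ (1, g) v
  rw [← Module.End.mul_apply, ← map_mul, h2, map_mul, Module.End.mul_apply, h1]

/-- The representation of `G` on the `H`-invariants of a representation of `H × G`. -/
noncomputable def fstInvariantsRep (ρ : Representation R (H × G) V) :
    Representation R G (fstInvariants ρ) where
  toFun g := LinearMap.restrict (ρ (1, g)) (fstInvariants_stable ρ g)
  map_one' := by
    ext v
    show (ρ ((1 : H), (1 : G))) v = v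
    rw [show ((1 : H), (1 : G)) = (1 : H × G) from rfl, map_one]
    rfl
  map_mul' g₁ g₂ := by
    ext v
    show (ρ ((1 : H), g₁ * g₂)) v = ρ (1, g₁) (ρ (1, g₂) v)
    rw [← Module.End.mul_apply, ← map_mul]
    congr 1
    simp [Prod.ext_iff]

end InvariantsRep

/-- A `ℤ[G]`-module `M` (formalized as `M : Rep ℤ G`) is *cohomologically trivial* if for
every subgroup `H` of `G` and every `i > 0`, the group cohomology `Hⁱ(H, M)` of the
restriction of `M` to `H` vanishes. -/
def IsCohomologicallyTrivial {G : Type} [Group G] (M : Rep ℤ G) : Prop :=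
  ∀ (H : Subgroup G) (i : ℕ), 0 < i →
    Limits.IsZero
      (groupCohomology (Rep.res H.subtype M) i)

/-- If a functor sends `Y` to a zero object and `X` is a retract of `Y`, the functor sends
`X` to a zero object as well. -/
lemma isZero_obj_of_retract {C D : Type*} [Category C] [Category D]
    [Limits.HasZeroMorphisms D] {E : C ⥤ D} {Y : C} (hz : Limits.IsZero (E.obj Y))
    {X : C} (f : X ⟶ Y) (g : Y ⟶ X) (h : f ≫ g = 𝟙 X) : Limits.IsZero (E.obj X) := by
  rw [Limits.IsZero.iff_id_eq_zero, ← E.map_id, ← h, E.map_comp,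
    hz.eq_of_tgt (E.map f) 0, Limits.zero_comp]

/-- Let `ℓ` be a prime number and `G` a finite group whose order is not divisible by `ℓ`,
and let `C_ℓ = ℤ/ℓℤ`.  Let `N` be a module over `ℤ[1/ℓ][C_ℓ × G]` (formalized as a
`ℤ`-representation of `C_ℓ × G` on an abelian group `N` on which multiplication by `ℓ`
is invertible) whose underlying `ℤ[G]`-module is cohomologically trivial.  Then the
submodule `N^{C_ℓ}` of `C_ℓ`-invariants is cohomologically trivial as a `ℤ[G]`-module. -/
theorem cyclicInvariants_cohomologicallyTrivial
    (ℓ : ℕ) (hℓ : ℓ.Prime) (G : Type) [Group G] [Finite G] (hord : ¬ ℓ ∣ Nat.card G)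
    (N : Type) [AddCommGroup N]
    (ρ : Representation ℤ (Multiplicative (ZMod ℓ) × G) N)
    (hinv : Function.Bijective fun n : N => (ℓ : ℤ) • n)
    (hct : IsCohomologicallyTrivial
      (Rep.of (MonoidHom.comp ρ (MonoidHom.inr (Multiplicative (ZMod ℓ)) G)))) :
    IsCohomologicallyTrivial (Rep.of (fstInvariantsRep ρ)) := by
  classical
  haveI : NeZero ℓ := ⟨hℓ.ne_zero⟩
  -- the linear equivalence "multiplication by ℓ"
  let L : N ≃ₗ[ℤ] N := LinearEquiv.ofBijective ((ℓ : ℤ) • (LinearMap.id : N →ₗ[ℤ] N)) hinv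
  have hL : ∀ n : N, L n = (ℓ : ℤ) • n := fun n => rfl
  -- L.symm commutes with every ℤ-linear endomorphism
  have hcomm : ∀ (f : N →ₗ[ℤ] N) (x : N), f (L.symm x) = L.symm (f x) := by
    intro f x
    apply L.injective
    rw [hL, ← map_smul, ← hL, L.apply_symm_apply, L.apply_symm_apply]
  -- the "sum over C_ℓ" operator
  let s : N →ₗ[ℤ] N := ∑ σ : Multiplicative (ZMod ℓ), ρ (σ, 1)
  have hs_apply : ∀ n : N, s n = ∑ σ : Multiplicative (ZMod ℓ), ρ (σ, 1) n := by
    intro n; simp [s, LinearMap.sum_apply]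
  have hs_inv : ∀ n : N, s n ∈ fstInvariants ρ := by
    intro n σ₀
    show ρ (σ₀, 1) (s n) = s n
    rw [hs_apply, map_sum]
    refine Fintype.sum_bijective (fun σ => σ₀ * σ) (Group.mulLeft_bijective σ₀) _ _
      (fun σ => ?_)
    rw [← Module.End.mul_apply, ← map_mul]
    congr 2
    simp [Prod.ext_iff]
  -- the averaging operator
  let e : N →ₗ[ℤ] N := L.symm.toLinearMap ∘ₗ s
  have he_inv : ∀ n : N, e n ∈ fstInvariants ρ := by
    intro n σ₀
    show ρ (σ₀, 1) (L.symm (s n)) = L.symm (s n)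
    rw [hcomm]
    exact congrArg L.symm (hs_inv n σ₀)
  have he_G : ∀ (g : G) (n : N), e (ρ (1, g) n) = ρ (1, g) (e n) := by
    intro g n
    show L.symm (s (ρ (1, g) n)) = ρ (1, g) (L.symm (s n))
    rw [hcomm]
    congr 1
    rw [hs_apply, hs_apply, map_sum]
    refine Finset.sum_congr rfl (fun σ _ => ?_)
    rw [← Module.End.mul_apply, ← Module.End.mul_apply, ← map_mul, ← map_mul,
      show ((σ, 1) : Multiplicative (ZMod ℓ) × G) * (1, g) = (1, g) * (σ, 1) by
        simp [Prod.ext_iff]]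
  have he_id : ∀ v : N, v ∈ fstInvariants ρ → e v = v := by
    intro v hv
    show L.symm (s v) = v
    have h1 : ∑ σ : Multiplicative (ZMod ℓ), ρ (σ, 1) v
        = ∑ _σ : Multiplicative (ZMod ℓ), v :=
      Finset.sum_congr rfl (fun σ _ => hv σ)
    have h2 : s v = (ℓ : ℤ) • v := by
      rw [hs_apply, h1, Finset.sum_const, Finset.card_univ]
      rw [Fintype.card_multiplicative, ZMod.card, natCast_zsmul]
    rw [h2, ← hL, L.symm_apply_apply]
  -- set up the representations and the retraction in `Rep ℤ G`
  set A : Rep ℤ G := Rep.of (MonoidHom.comp ρ (MonoidHom.inr (Multiplicative (ZMod ℓ)) G))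
    with hA
  set B : Rep ℤ G := Rep.of (fstInvariantsRep ρ) with hB
  let ι : B ⟶ A :=
    Rep.ofHom
      { toLinearMap := (fstInvariants ρ).subtype
        isIntertwining' := fun g => rfl }
  let π : A ⟶ B :=
    Rep.ofHom
      { toLinearMap := LinearMap.codRestrict (fstInvariants ρ) e he_inv
        isIntertwining' := fun g => LinearMap.ext fun n => Subtype.ext (he_G g n) }
  have hretr : ι ≫ π = 𝟙 B := by
    apply Rep.hom_ext; apply Representation.IntertwiningMap.ext; apply LinearMap.ext; intro v
    exact Subtype.ext (he_id v.1 v.2)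
  -- now the cohomological argument
  intro H i hi
  have hzA := Limits.IsZero.of_iso (hct H i hi)
    (groupCohomologyIsoExt (Rep.res H.subtype A) i).symm
  refine Limits.IsZero.of_iso ?_
    (groupCohomologyIsoExt (Rep.res H.subtype B) i)
  exact isZero_obj_of_retract hzA
    ((Rep.resFunctor H.subtype).map ι)
    ((Rep.resFunctor H.subtype).map π)
    (by rw [← CategoryTheory.Functor.map_comp, hretr, CategoryTheory.Functor.map_id])
end

section
/- Let ℓ be a prime number and R a commutative ring in which ℓ is invertible. Let Δ = (ℤ/ℓℤ)ˣ act on C_ℓ = ℤ/ℓℤ by multiplication, let Γ = C_ℓ ⋊ Δ be the corresponding semidirect product, and write σ for the generator 1 of C_ℓ, viewed in Γ. Let Q be a module over the group algebra R[Γ] on which the element Σ_{i=0}^{ℓ-1} σ^i acts as zero. Then the sequence 0 → Q → Q^Δ ⊗_R R[C_ℓ] → Q^Δ → 0 is a short exact sequence, where the first map sends q to Σ_{i=0}^{ℓ-1} ((Σ_{a∈Δ} a·σ^{-i})·q) ⊗ σ^i (each coefficient Σ_{a∈Δ} (a·σ^{-i})·q indeed lies in Q^Δ), and the second map is induced by the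 augmentation R[C_ℓ] → R. Moreover, both maps are C_ℓ-equivariant, where C_ℓ acts on Q through σ, on Q^Δ ⊗_R R[C_ℓ] through left translation on the factor R[C_ℓ], and trivially on Q^Δ. -/
open scoped TensorProduct

set_option maxHeartbeats 1000000

noncomputable section

/-- The action of `Δ = (ℤ/ℓℤ)ˣ` on `C_ℓ = ℤ/ℓℤ` (written multiplicatively) by
multiplication, as a homomorphism to the automorphism group. -/
def deltaAut (ℓ : ℕ) : (ZMod ℓ)ˣ →* MulAut (Multiplicative (ZMod ℓ)) where
  toFun u := AddEquiv.toMultiplicative ((DistribMulAction.toAddAut ((ZMod ℓ)ˣ) (ZMod ℓ)) u)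
  map_one' := by
    ext x
    simp
  map_mul' u v := by
    ext x
    simp [mul_smul]

/-- The semidirect product `Γ = C_ℓ ⋊ Δ`. -/
abbrev Gam (ℓ : ℕ) := Multiplicative (ZMod ℓ) ⋊[deltaAut ℓ] (ZMod ℓ)ˣ

/-- The generator `σ` of `C_ℓ`, i.e. the element `1` of `ℤ/ℓℤ` written multiplicatively. -/
def sigmaGen (ℓ : ℕ) : Multiplicative (ZMod ℓ) := Multiplicative.ofAdd 1

variable (ℓ : ℕ) [NeZero ℓ] (R : Type) [CommRing R]
variable (Q : Type) [AddCommGroup Q] [Module R Q] (ρ : Representation R (Gam ℓ) Q)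

/-- The submodule `Q^Δ` of `Δ`-invariants of an `R[Γ]`-module `Q`. -/
def deltaInvariants : Submodule R Q :=
  Representation.invariants (MonoidHom.comp ρ (SemidirectProduct.inr))

lemma coeff_mem (i : ℕ) (q : Q) :
    (∑ a : (ZMod ℓ)ˣ,
        ρ (SemidirectProduct.inr a * SemidirectProduct.inl ((sigmaGen ℓ ^ i)⁻¹)) q)
      ∈ deltaInvariants ℓ R Q ρ := by
  rw [deltaInvariants, Representation.mem_invariants]
  intro b
  simp only [MonoidHom.comp_apply]
  rw [map_sum]
  have key : ∀ F : (ZMod ℓ)ˣ → Q, ∑ a : (ZMod ℓ)ˣ, F (b * a) = ∑ a : (ZMod ℓ)ˣ, F a :=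
    fun F => Fintype.sum_bijective (fun a => b * a) (Group.mulLeft_bijective b) _ F
      (fun _ => rfl)
  have step : ∀ a : (ZMod ℓ)ˣ,
      ρ (SemidirectProduct.inr b)
        (ρ (SemidirectProduct.inr a * SemidirectProduct.inl ((sigmaGen ℓ ^ i)⁻¹)) q) =
      ρ (SemidirectProduct.inr (b * a) * SemidirectProduct.inl ((sigmaGen ℓ ^ i)⁻¹)) q := by
    intro a
    have h3 : SemidirectProduct.inr (φ := deltaAut ℓ) b *
        (SemidirectProduct.inr a * SemidirectProduct.inl ((sigmaGen ℓ ^ i)⁻¹)) =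
        SemidirectProduct.inr (b * a) * SemidirectProduct.inl ((sigmaGen ℓ ^ i)⁻¹) := by
      rw [← mul_assoc, map_mul]
    rw [← Module.End.mul_apply, ← map_mul, h3]
  rw [Finset.sum_congr rfl fun a _ => step a]
  exact key fun a =>
    ρ (SemidirectProduct.inr a * SemidirectProduct.inl ((sigmaGen ℓ ^ i)⁻¹)) q

/-- The `i`-th coefficient map `q ↦ Σ_{a ∈ Δ} (a·σ^{-i})·q`, viewed as an `R`-linear map
from `Q` to `Q^Δ`. -/
def coeffMap (i : ℕ) : Q →ₗ[R] deltaInvariants ℓ R Q ρ :=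
  LinearMap.codRestrict _
    (∑ a : (ZMod ℓ)ˣ,
      (ρ (SemidirectProduct.inr a * SemidirectProduct.inl ((sigmaGen ℓ ^ i)⁻¹)) : Q →ₗ[R] Q))
    (fun q => by simpa [LinearMap.sum_apply] using coeff_mem ℓ R Q ρ i q)

/-- The first map `Q → Q^Δ ⊗_R R[C_ℓ]`,
`q ↦ Σ_{i=0}^{ℓ-1} (Σ_{a ∈ Δ} (a·σ^{-i})·q) ⊗ σ^i`. -/
def firstMap : Q →ₗ[R] (deltaInvariants ℓ R Q ρ) ⊗[R] (Multiplicative (ZMod ℓ) →₀ R) :=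
  ∑ i ∈ Finset.range ℓ,
    LinearMap.comp ((TensorProduct.mk R (deltaInvariants ℓ R Q ρ)
        (Multiplicative (ZMod ℓ) →₀ R)).flip (Finsupp.single (sigmaGen ℓ ^ i) (1 : R)))
      (coeffMap ℓ R Q ρ i)

/-- The augmentation `R[C_ℓ] → R`. -/
def augmentation : (Multiplicative (ZMod ℓ) →₀ R) →ₗ[R] R :=
  Finsupp.lsum R (fun _ => LinearMap.id)

/-- The second map `Q^Δ ⊗_R R[C_ℓ] → Q^Δ`, induced by the augmentation. -/
def secondMap : (deltaInvariants ℓ R Q ρ) ⊗[R] (Multiplicative (ZMod ℓ) →₀ R) →ₗ[R]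
    deltaInvariants ℓ R Q ρ :=
  LinearMap.comp (TensorProduct.rid R (deltaInvariants ℓ R Q ρ)).toLinearMap
    (TensorProduct.map LinearMap.id (augmentation ℓ R))

set_option linter.unusedSectionVars false

section Aux

open Multiplicative SemidirectProduct Finsupp TensorProduct

lemma deltaAut_apply' (a : (ZMod ℓ)ˣ) (x : Multiplicative (ZMod ℓ)) :
    deltaAut ℓ a x = Multiplicative.ofAdd ((a : ZMod ℓ) * x.toAdd) := by
  simp [deltaAut, Units.smul_def]

lemma sigmaGen_pow (i : ℕ) : sigmaGen ℓ ^ i = Multiplicative.ofAdd ((i : ZMod ℓ)) := by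
  rw [sigmaGen, ← ofAdd_nsmul]
  simp

lemma sum_range_mult {M : Type} [AddCommMonoid M] (F : Multiplicative (ZMod ℓ) → M) :
    ∑ i ∈ Finset.range ℓ, F (sigmaGen ℓ ^ i) = ∑ c : Multiplicative (ZMod ℓ), F c := by
  simp only [sigmaGen_pow]
  exact Finset.sum_nbij' (i := fun n => Multiplicative.ofAdd ((n : ZMod ℓ)))
    (j := fun c => (Multiplicative.toAdd c).val)
    (fun n _ => Finset.mem_univ _)
    (fun c _ => Finset.mem_range.2 (ZMod.val_lt _))
    (fun n hn => by simp [ZMod.val_natCast_of_lt (Finset.mem_range.1 hn)])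
    (fun c _ => by simp [ZMod.natCast_rightInverse _])
    (fun n _ => rfl)

lemma inr_mul_inl' (a : (ZMod ℓ)ˣ) (x : Multiplicative (ZMod ℓ)) :
    (SemidirectProduct.inr a * SemidirectProduct.inl x : Gam ℓ) =
      SemidirectProduct.inl (deltaAut ℓ a x) * SemidirectProduct.inr a := by
  rw [SemidirectProduct.inl_aut, mul_assoc, mul_assoc, ← map_mul, inv_mul_cancel, map_one,
    mul_one]

lemma sum_units_mul {M : Type} [AddCommGroup M] (hℓ : ℓ.Prime) (F : ZMod ℓ → M)
    {m : ZMod ℓ} (hm : m ≠ 0) :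
    ∑ a : (ZMod ℓ)ˣ, F ((a : ZMod ℓ) * m) = (∑ x : ZMod ℓ, F x) - F 0 := by
  haveI : Fact ℓ.Prime := ⟨hℓ⟩
  have h1 : ∑ a : (ZMod ℓ)ˣ, F ((a : ZMod ℓ) * m) = ∑ a : (ZMod ℓ)ˣ, F (a : ZMod ℓ) := by
    rw [← Fintype.sum_bijective (fun a : (ZMod ℓ)ˣ => a * Units.mk0 m hm)
      (Group.mulRight_bijective _) _ (fun a => F (a : ZMod ℓ)) (fun a => rfl)]
    rfl
  have h2 : ∑ a : (ZMod ℓ)ˣ, F (a : ZMod ℓ) = ∑ x ∈ Finset.univ.erase (0 : ZMod ℓ), F x := by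
    rw [Finset.sum_subtype (p := fun x : ZMod ℓ => x ≠ 0) (Finset.univ.erase (0 : ZMod ℓ))
      (fun x => by simp [Finset.mem_erase]) F]
    exact Fintype.sum_equiv unitsEquivNeZero _ _ (fun a => rfl)
  rw [h1, h2, eq_sub_iff_add_eq, add_comm, Finset.add_sum_erase _ F (Finset.mem_univ _)]

lemma card_units' (hℓ : ℓ.Prime) : Fintype.card (ZMod ℓ)ˣ = ℓ - 1 := by
  rw [ZMod.card_units_eq_totient, Nat.totient_prime hℓ]

end Aux

section Aux2

open Multiplicative SemidirectProduct Finsupp TensorProduct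

/-- Generalized coefficient operator. -/
def cfL (d : Multiplicative (ZMod ℓ)) : Q →ₗ[R] Q :=
  ∑ a : (ZMod ℓ)ˣ, (ρ (SemidirectProduct.inr a * SemidirectProduct.inl d⁻¹) : Q →ₗ[R] Q)

lemma sigma_pow_val (d : Multiplicative (ZMod ℓ)) :
    sigmaGen ℓ ^ (Multiplicative.toAdd d).val = d := by
  rw [sigmaGen_pow, ZMod.natCast_rightInverse (Multiplicative.toAdd d), ofAdd_toAdd]

lemma cfL_mem (d : Multiplicative (ZMod ℓ)) (q : Q) :
    cfL ℓ R Q ρ d q ∈ deltaInvariants ℓ R Q ρ := by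
  rw [← sigma_pow_val ℓ d]
  simpa [cfL, LinearMap.sum_apply] using
    coeff_mem ℓ R Q ρ (Multiplicative.toAdd d).val q

def cfR (d : Multiplicative (ZMod ℓ)) : Q →ₗ[R] deltaInvariants ℓ R Q ρ :=
  LinearMap.codRestrict _ (cfL ℓ R Q ρ d) (cfL_mem ℓ R Q ρ d)

lemma cfR_coe (d : Multiplicative (ZMod ℓ)) (q : Q) :
    (cfR ℓ R Q ρ d q : Q) = cfL ℓ R Q ρ d q := rfl

lemma coeffMap_eq (i : ℕ) : coeffMap ℓ R Q ρ i = cfR ℓ R Q ρ (sigmaGen ℓ ^ i) := rfl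

lemma firstMap_apply (q : Q) :
    firstMap ℓ R Q ρ q =
      ∑ d : Multiplicative (ZMod ℓ), (cfR ℓ R Q ρ d q) ⊗ₜ[R] Finsupp.single d (1 : R) := by
  rw [firstMap, LinearMap.sum_apply]
  rw [← sum_range_mult ℓ (fun d => (cfR ℓ R Q ρ d q) ⊗ₜ[R] Finsupp.single d (1 : R))]
  refine Finset.sum_congr rfl fun i _ => ?_
  simp [coeffMap_eq, TensorProduct.mk_apply]

def piMap : (deltaInvariants ℓ R Q ρ) ⊗[R] (Multiplicative (ZMod ℓ) →₀ R) →ₗ[R] Q :=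
  TensorProduct.lift ((Finsupp.lsum R (fun c : Multiplicative (ZMod ℓ) =>
    LinearMap.toSpanSingleton R _
      ((ρ (SemidirectProduct.inl c)).comp (deltaInvariants ℓ R Q ρ).subtype))).flip)

lemma piMap_tmul_single (x : deltaInvariants ℓ R Q ρ) (c : Multiplicative (ZMod ℓ)) (r : R) :
    piMap ℓ R Q ρ (x ⊗ₜ Finsupp.single c r) = r • ρ (SemidirectProduct.inl c) (x : Q) := by
  simp [piMap, LinearMap.toSpanSingleton]

lemma secondMap_tmul (x : deltaInvariants ℓ R Q ρ) (f : Multiplicative (ZMod ℓ) →₀ R) :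
    secondMap ℓ R Q ρ (x ⊗ₜ f) = (∑ c ∈ f.support, f c) • x := by
  simp [secondMap, augmentation, Finsupp.sum]

lemma secondMap_tmul_single (x : deltaInvariants ℓ R Q ρ) (c : Multiplicative (ZMod ℓ))
    (r : R) : secondMap ℓ R Q ρ (x ⊗ₜ Finsupp.single c r) = r • x := by
  simp [secondMap, augmentation]

end Aux2

section Aux3

open Multiplicative SemidirectProduct Finsupp TensorProduct

lemma cfL_rho (d c : Multiplicative (ZMod ℓ)) (q : Q) :
    cfL ℓ R Q ρ d (ρ (SemidirectProduct.inl c) q) = cfL ℓ R Q ρ (c⁻¹ * d) q := by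
  simp only [cfL, LinearMap.sum_apply]
  refine Finset.sum_congr rfl fun a _ => ?_
  rw [← Module.End.mul_apply, ← map_mul, mul_assoc, ← map_mul]
  congr 2
  rw [mul_inv_rev, inv_inv]

lemma hsum_univ
    (hsum : ∀ q : Q, ∑ i ∈ Finset.range ℓ,
      ρ (SemidirectProduct.inl (sigmaGen ℓ ^ i)) q = 0) (q : Q) :
    ∑ x : ZMod ℓ, ρ (SemidirectProduct.inl (Multiplicative.ofAdd x)) q = 0 := by
  rw [← hsum q, sum_range_mult ℓ (fun d => ρ (SemidirectProduct.inl d) q)]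
  exact Fintype.sum_equiv Multiplicative.ofAdd _ _ fun x => rfl

lemma cfL_invariant (d : Multiplicative (ZMod ℓ)) (x : Q)
    (hx : x ∈ deltaInvariants ℓ R Q ρ) :
    cfL ℓ R Q ρ d x =
      ∑ a : (ZMod ℓ)ˣ, ρ (SemidirectProduct.inl
        (Multiplicative.ofAdd ((a : ZMod ℓ) * Multiplicative.toAdd d⁻¹))) x := by
  rw [deltaInvariants, Representation.mem_invariants] at hx
  simp only [cfL, LinearMap.sum_apply]
  refine Finset.sum_congr rfl fun a _ => ?_
  rw [inr_mul_inl', map_mul, Module.End.mul_apply, ← deltaAut_apply']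
  have := hx a
  simp only [MonoidHom.comp_apply] at this
  rw [this]

lemma cfL_invariant_eq (hℓ : ℓ.Prime)
    (hsum : ∀ q : Q, ∑ i ∈ Finset.range ℓ,
      ρ (SemidirectProduct.inl (sigmaGen ℓ ^ i)) q = 0)
    (d : Multiplicative (ZMod ℓ)) (x : Q) (hx : x ∈ deltaInvariants ℓ R Q ρ) :
    cfL ℓ R Q ρ d x + x = if d = 1 then ℓ • x else 0 := by
  rw [cfL_invariant ℓ R Q ρ d x hx]
  by_cases hd : d = 1
  · subst hd
    simp only [if_pos rfl, inv_one]
    have : (Multiplicative.toAdd (1 : Multiplicative (ZMod ℓ))) = 0 := rfl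
    rw [this]
    simp only [mul_zero, ofAdd_zero, map_one]
    rw [Finset.sum_const, Finset.card_univ, card_units' ℓ hℓ]
    simp only [Module.End.one_apply, smul_smul]
    rw [← succ_nsmul, Nat.sub_add_cancel hℓ.one_lt.le]
    simp
  · rw [if_neg hd]
    have hm : Multiplicative.toAdd d⁻¹ ≠ 0 := by
      simp only [toAdd_inv, ne_eq, neg_eq_zero]
      intro h
      exact hd (by rw [← ofAdd_toAdd d, h, ofAdd_zero])
    rw [sum_units_mul ℓ hℓ (fun y => ρ (SemidirectProduct.inl (Multiplicative.ofAdd y)) x) hm]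
    rw [hsum_univ ℓ R Q ρ hsum x]
    simp

lemma pi_first (hℓ : ℓ.Prime)
    (hsum : ∀ q : Q, ∑ i ∈ Finset.range ℓ,
      ρ (SemidirectProduct.inl (sigmaGen ℓ ^ i)) q = 0) (q : Q) :
    ∑ d : Multiplicative (ZMod ℓ), ρ (SemidirectProduct.inl d) (cfL ℓ R Q ρ d q) = ℓ • q := by
  have key : ∀ d : Multiplicative (ZMod ℓ),
      ρ (SemidirectProduct.inl d) (cfL ℓ R Q ρ d q) =
      ∑ a : (ZMod ℓ)ˣ, ρ (SemidirectProduct.inl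
        (Multiplicative.ofAdd ((1 - (a : ZMod ℓ)) * Multiplicative.toAdd d)))
          (ρ (SemidirectProduct.inr a) q) := by
    intro d
    simp only [cfL, LinearMap.sum_apply, map_sum]
    refine Finset.sum_congr rfl fun a _ => ?_
    rw [inr_mul_inl', deltaAut_apply', ← Module.End.mul_apply, ← map_mul, ← mul_assoc,
      ← map_mul, map_mul, Module.End.mul_apply]
    congr 2
    rw [← ofAdd_toAdd d, ← ofAdd_add]
    congr 1
    simp only [toAdd_inv, toAdd_ofAdd]
    ring_nf
  rw [Finset.sum_congr rfl (fun d _ => key d), Finset.sum_comm]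
  have inner : ∀ a : (ZMod ℓ)ˣ,
      (∑ d : Multiplicative (ZMod ℓ), ρ (SemidirectProduct.inl
        (Multiplicative.ofAdd ((1 - (a : ZMod ℓ)) * Multiplicative.toAdd d)))
          (ρ (SemidirectProduct.inr a) q)) = if a = 1 then ℓ • q else 0 := by
    intro a
    by_cases ha : a = 1
    · subst ha
      simp only [if_pos rfl, Units.val_one, sub_self, zero_mul, ofAdd_zero, map_one,
        Module.End.one_apply]
      rw [Finset.sum_const, Finset.card_univ]
      congr 1
      rw [Fintype.card_multiplicative]
      exact ZMod.card ℓ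
    · rw [if_neg ha]
      have hm : (1 - (a : ZMod ℓ)) ≠ 0 := by
        rw [sub_ne_zero]
        exact fun h => ha (Units.ext h.symm)
      have := hsum_univ ℓ R Q ρ hsum (ρ (SemidirectProduct.inr a) q)
      calc ∑ d : Multiplicative (ZMod ℓ), ρ (SemidirectProduct.inl
            (Multiplicative.ofAdd ((1 - (a : ZMod ℓ)) * Multiplicative.toAdd d)))
            (ρ (SemidirectProduct.inr a) q)
          = ∑ x : ZMod ℓ, ρ (SemidirectProduct.inl
            (Multiplicative.ofAdd ((1 - (a : ZMod ℓ)) * x)))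
            (ρ (SemidirectProduct.inr a) q) :=
            (Fintype.sum_equiv Multiplicative.ofAdd _ _ fun x => rfl).symm
        _ = ∑ x : ZMod ℓ, ρ (SemidirectProduct.inl (Multiplicative.ofAdd x))
            (ρ (SemidirectProduct.inr a) q) := by
            haveI : Fact ℓ.Prime := ⟨hℓ⟩
            exact Fintype.sum_bijective (fun x : ZMod ℓ => (1 - (a : ZMod ℓ)) * x)
              (Equiv.mulLeft₀ (1 - (a : ZMod ℓ)) hm).bijective _ _ fun x => rfl
        _ = 0 := this
  rw [Finset.sum_congr rfl (fun a _ => inner a), Finset.sum_ite_eq' Finset.univ 1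
    (fun _ => ℓ • q)]
  simp

end Aux3

section Aux4

open Multiplicative SemidirectProduct Finsupp TensorProduct

lemma hsum_mult
    (hsum : ∀ q : Q, ∑ i ∈ Finset.range ℓ,
      ρ (SemidirectProduct.inl (sigmaGen ℓ ^ i)) q = 0) (q : Q) :
    ∑ d : Multiplicative (ZMod ℓ), ρ (SemidirectProduct.inl d) q = 0 := by
  rw [← sum_range_mult ℓ (fun d => ρ (SemidirectProduct.inl d) q)]
  exact hsum q

lemma piMap_firstMap (hℓ : ℓ.Prime)
    (hsum : ∀ q : Q, ∑ i ∈ Finset.range ℓ,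
      ρ (SemidirectProduct.inl (sigmaGen ℓ ^ i)) q = 0) (q : Q) :
    piMap ℓ R Q ρ (firstMap ℓ R Q ρ q) = ℓ • q := by
  rw [firstMap_apply, map_sum]
  simp only [piMap_tmul_single, one_smul, cfR_coe]
  exact pi_first ℓ R Q ρ hℓ hsum q

/-- The norm element of the group algebra. -/
def nElt : Multiplicative (ZMod ℓ) →₀ R :=
  ∑ d : Multiplicative (ZMod ℓ), Finsupp.single d (1 : R)

lemma cfR_rho_invariant (hℓ : ℓ.Prime)
    (hsum : ∀ q : Q, ∑ i ∈ Finset.range ℓ,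
      ρ (SemidirectProduct.inl (sigmaGen ℓ ^ i)) q = 0)
    (c d : Multiplicative (ZMod ℓ)) (x : deltaInvariants ℓ R Q ρ) :
    cfR ℓ R Q ρ d (ρ (SemidirectProduct.inl c) (x : Q)) =
      (if c = d then (ℓ : R) • x else 0) - x := by
  apply Subtype.ext
  rw [cfR_coe, cfL_rho]
  rw [eq_sub_of_add_eq (cfL_invariant_eq ℓ R Q ρ hℓ hsum (c⁻¹ * d) (x : Q) x.2)]
  rw [AddSubgroupClass.coe_sub]
  congr 1
  rw [apply_ite (Subtype.val : deltaInvariants ℓ R Q ρ → Q)]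
  simp [inv_mul_eq_one, Nat.cast_smul_eq_nsmul]

lemma firstMap_piMap (hℓ : ℓ.Prime)
    (hsum : ∀ q : Q, ∑ i ∈ Finset.range ℓ,
      ρ (SemidirectProduct.inl (sigmaGen ℓ ^ i)) q = 0)
    (v : (deltaInvariants ℓ R Q ρ) ⊗[R] (Multiplicative (ZMod ℓ) →₀ R)) :
    firstMap ℓ R Q ρ (piMap ℓ R Q ρ v) =
      (ℓ : R) • v - (secondMap ℓ R Q ρ v) ⊗ₜ[R] nElt ℓ R := by
  induction v using TensorProduct.induction_on with
  | zero => simp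
  | add v w hv hw =>
      rw [map_add, map_add, hv, hw, map_add, add_tmul, smul_add]
      abel
  | tmul x f =>
      induction f using Finsupp.induction_linear with
      | zero => simp
      | add f g hf hg =>
          rw [tmul_add, map_add, map_add, hf, hg, map_add, add_tmul, smul_add]
          abel
      | single c r =>
          rw [piMap_tmul_single, map_smul, firstMap_apply, secondMap_tmul_single]
          rw [Finset.sum_congr rfl
            (fun d _ => by rw [cfR_rho_invariant ℓ R Q ρ hℓ hsum c d x, sub_tmul, ite_tmul])]
          rw [Finset.sum_sub_distrib
            (f := fun d : Multiplicative (ZMod ℓ) =>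
              (if c = d then ((ℓ : R) • x) ⊗ₜ[R] Finsupp.single d (1 : R) else 0))
            (g := fun d : Multiplicative (ZMod ℓ) => x ⊗ₜ[R] Finsupp.single d (1 : R))]
          rw [Finset.sum_ite_eq, if_pos (Finset.mem_univ c), ← tmul_sum, smul_sub]
          congr 1
          · rw [← tmul_smul, smul_tmul']
            congr 1
            simp

lemma firstMap_equivariant (c : Multiplicative (ZMod ℓ)) (q : Q) :
    firstMap ℓ R Q ρ (ρ (SemidirectProduct.inl c) q) =
      TensorProduct.map LinearMap.id
        ((MonoidAlgebra.coeffLinearEquiv R).toLinearMap ∘ₗ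
            Representation.ofMulAction R (Multiplicative (ZMod ℓ)) (Multiplicative (ZMod ℓ)) c ∘ₗ
            (MonoidAlgebra.coeffLinearEquiv R).symm.toLinearMap)
        (firstMap ℓ R Q ρ q) := by
  rw [firstMap_apply, firstMap_apply, map_sum]
  have hterm : ∀ d : Multiplicative (ZMod ℓ),
      TensorProduct.map LinearMap.id
        ((MonoidAlgebra.coeffLinearEquiv R).toLinearMap ∘ₗ
            Representation.ofMulAction R (Multiplicative (ZMod ℓ)) (Multiplicative (ZMod ℓ)) c ∘ₗ
            (MonoidAlgebra.coeffLinearEquiv R).symm.toLinearMap)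
        ((cfR ℓ R Q ρ d q) ⊗ₜ[R] Finsupp.single d (1 : R)) =
      (cfR ℓ R Q ρ d q) ⊗ₜ[R] Finsupp.single (c * d) (1 : R) := by
    intro d
    rw [TensorProduct.map_tmul, LinearMap.comp_apply, LinearMap.comp_apply,
        LinearEquiv.coe_coe, LinearEquiv.coe_coe, MonoidAlgebra.coeffLinearEquiv_symm_apply,
        MonoidAlgebra.ofCoeff_single, Representation.ofMulAction_single,
        MonoidAlgebra.coeffLinearEquiv_apply, MonoidAlgebra.coeff_single, LinearMap.id_apply,
      smul_eq_mul]
  rw [Finset.sum_congr rfl (fun d _ => hterm d)]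
  rw [← Equiv.sum_comp (Equiv.mulLeft c)
    (fun d => (cfR ℓ R Q ρ d (ρ (SemidirectProduct.inl c) q)) ⊗ₜ[R]
      Finsupp.single d (1 : R))]
  refine Finset.sum_congr rfl fun d _ => ?_
  simp only [Equiv.coe_mulLeft]
  congr 1
  apply Subtype.ext
  rw [cfR_coe, cfR_coe, cfL_rho, inv_mul_cancel_left]

lemma secondMap_equivariant (c : Multiplicative (ZMod ℓ))
    (v : (deltaInvariants ℓ R Q ρ) ⊗[R] (Multiplicative (ZMod ℓ) →₀ R)) :
    secondMap ℓ R Q ρ (TensorProduct.map LinearMap.id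
      ((MonoidAlgebra.coeffLinearEquiv R).toLinearMap ∘ₗ
            Representation.ofMulAction R (Multiplicative (ZMod ℓ)) (Multiplicative (ZMod ℓ)) c ∘ₗ
            (MonoidAlgebra.coeffLinearEquiv R).symm.toLinearMap)
      v) = secondMap ℓ R Q ρ v := by
  induction v using TensorProduct.induction_on with
  | zero => simp
  | add v w hv hw => rw [map_add, map_add, hv, hw, map_add]
  | tmul x f =>
      induction f using Finsupp.induction_linear with
      | zero => simp
      | add f g hf hg => rw [tmul_add, map_add, map_add, hf, hg, map_add]
      | single d r =>
          rw [TensorProduct.map_tmul, LinearMap.comp_apply, LinearMap.comp_apply,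
        LinearEquiv.coe_coe, LinearEquiv.coe_coe, MonoidAlgebra.coeffLinearEquiv_symm_apply,
        MonoidAlgebra.ofCoeff_single, Representation.ofMulAction_single,
        MonoidAlgebra.coeffLinearEquiv_apply, MonoidAlgebra.coeff_single, LinearMap.id_apply,
            secondMap_tmul_single, secondMap_tmul_single]

end Aux4

/-- Let `ℓ` be a prime and `R` a commutative ring in which `ℓ` is invertible.  Let
`Γ = C_ℓ ⋊ Δ` with `Δ = (ℤ/ℓℤ)ˣ` acting on `C_ℓ` by multiplication, and let `σ` denote
the generator `1` of `C_ℓ`.  Let `Q` be an `R[Γ]`-module on which `Σ_{i=0}^{ℓ-1} σ^i`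
acts as zero.  Then `0 → Q → Q^Δ ⊗_R R[C_ℓ] → Q^Δ → 0` is a short exact sequence, where
the first map sends `q` to `Σ_{i=0}^{ℓ-1} ((Σ_{a ∈ Δ} a·σ^{-i})·q) ⊗ σ^i` and the second
map is induced by the augmentation `R[C_ℓ] → R`.  Moreover both maps are
`C_ℓ`-equivariant, where `C_ℓ` acts on `Q` through `σ`, on `Q^Δ ⊗_R R[C_ℓ]` through left
translation on the factor `R[C_ℓ]`, and trivially on `Q^Δ`. -/
theorem firstMap_secondMap_shortExact_and_equivariant
    (hℓ : ℓ.Prime) (hu : IsUnit (ℓ : R))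
    (hsum : ∀ q : Q, ∑ i ∈ Finset.range ℓ, ρ (SemidirectProduct.inl (sigmaGen ℓ ^ i)) q = 0) :
    Function.Injective (firstMap ℓ R Q ρ) ∧
    LinearMap.range (firstMap ℓ R Q ρ) = LinearMap.ker (secondMap ℓ R Q ρ) ∧
    Function.Surjective (secondMap ℓ R Q ρ) ∧
    (∀ (c : Multiplicative (ZMod ℓ)) (q : Q),
      firstMap ℓ R Q ρ (ρ (SemidirectProduct.inl c) q) =
        TensorProduct.map LinearMap.id
          ((MonoidAlgebra.coeffLinearEquiv R).toLinearMap ∘ₗ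
            Representation.ofMulAction R (Multiplicative (ZMod ℓ)) (Multiplicative (ZMod ℓ)) c ∘ₗ
            (MonoidAlgebra.coeffLinearEquiv R).symm.toLinearMap)
          (firstMap ℓ R Q ρ q)) ∧
    (∀ (c : Multiplicative (ZMod ℓ))
        (v : (deltaInvariants ℓ R Q ρ) ⊗[R] (Multiplicative (ZMod ℓ) →₀ R)),
      secondMap ℓ R Q ρ
          (TensorProduct.map LinearMap.id
            ((MonoidAlgebra.coeffLinearEquiv R).toLinearMap ∘ₗ
            Representation.ofMulAction R (Multiplicative (ZMod ℓ)) (Multiplicative (ZMod ℓ)) c ∘ₗ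
            (MonoidAlgebra.coeffLinearEquiv R).symm.toLinearMap)
            v) =
        secondMap ℓ R Q ρ v) := by

  have hℓR : ∀ q : Q, firstMap ℓ R Q ρ q = 0 → q = 0 := by
    intro q hq
    have h1 : (ℓ : R) • q = 0 := by
      rw [Nat.cast_smul_eq_nsmul, ← piMap_firstMap ℓ R Q ρ hℓ hsum q, hq, map_zero]
    have h2 := congrArg (fun z : Q => ((hu.unit⁻¹ : Rˣ) : R) • z) h1
    simpa [smul_smul, IsUnit.val_inv_mul] using h2
  have hinj : Function.Injective (firstMap ℓ R Q ρ) :=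
    LinearMap.ker_eq_bot.mp (LinearMap.ker_eq_bot'.mpr hℓR)
  refine ⟨hinj, ?_, ?_, firstMap_equivariant ℓ R Q ρ, secondMap_equivariant ℓ R Q ρ⟩
  · apply le_antisymm
    · rintro _ ⟨q, rfl⟩
      rw [LinearMap.mem_ker, firstMap_apply, map_sum]
      simp only [secondMap_tmul_single, one_smul]
      apply Subtype.ext
      rw [Submodule.coe_sum]
      simp only [cfR_coe, cfL, LinearMap.sum_apply]
      rw [Finset.sum_comm]
      have hzero : ∀ a : (ZMod ℓ)ˣ,
          ∑ d : Multiplicative (ZMod ℓ),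
            ρ (SemidirectProduct.inr a * SemidirectProduct.inl d⁻¹) q = 0 := by
        intro a
        have : ∀ d : Multiplicative (ZMod ℓ),
            ρ (SemidirectProduct.inr a * SemidirectProduct.inl d⁻¹) q =
            ρ (SemidirectProduct.inr a) (ρ (SemidirectProduct.inl d⁻¹) q) := by
          intro d
          rw [map_mul, Module.End.mul_apply]
        rw [Finset.sum_congr rfl (fun d _ => this d), ← map_sum]
        have hinv : (∑ d : Multiplicative (ZMod ℓ), ρ (SemidirectProduct.inl d⁻¹) q) =
            ∑ d : Multiplicative (ZMod ℓ), ρ (SemidirectProduct.inl d) q :=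
          Fintype.sum_equiv (Equiv.inv (Multiplicative (ZMod ℓ))) _ _ (fun d => rfl)
        rw [hinv, hsum_mult ℓ R Q ρ hsum q, map_zero]
      rw [Finset.sum_congr rfl (fun a _ => hzero a), Finset.sum_const_zero]
      simp
    · intro v hv
      rw [LinearMap.mem_ker] at hv
      refine ⟨((hu.unit⁻¹ : Rˣ) : R) • piMap ℓ R Q ρ v, ?_⟩
      calc firstMap ℓ R Q ρ (((hu.unit⁻¹ : Rˣ) : R) • piMap ℓ R Q ρ v)
          = ((hu.unit⁻¹ : Rˣ) : R) • ((ℓ : R) • v -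
              (secondMap ℓ R Q ρ v) ⊗ₜ[R] nElt ℓ R) := by
            rw [map_smul, firstMap_piMap ℓ R Q ρ hℓ hsum v]
        _ = ((hu.unit⁻¹ : Rˣ) : R) • ((ℓ : R) • v) -
              ((hu.unit⁻¹ : Rˣ) : R) • ((secondMap ℓ R Q ρ v) ⊗ₜ[R] nElt ℓ R) :=
            smul_sub _ _ _
        _ = v := by
            rw [hv, TensorProduct.zero_tmul, smul_zero, smul_smul, IsUnit.val_inv_mul,
              one_smul]
            exact sub_zero v
  · intro x
    refine ⟨x ⊗ₜ[R] Finsupp.single (1 : Multiplicative (ZMod ℓ)) (1 : R), ?_⟩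
    rw [secondMap_tmul_single, one_smul]


end
end

section
/- Let ℓ be a prime number and G a finite group whose order is not divisible by ℓ. Suppose g ∈ G, a ∈ ℤ/ℓℤ, b ∈ (ℤ/ℓℤ)ˣ, and f : ℤ/ℓℤ → G satisfy g · f(x) = f(b·x + a) for all x ∈ ℤ/ℓℤ. Then g = 1. Equivalently, for the action of G × Γ on Maps(ℤ/ℓℤ, G) in which Γ (the group of invertible affine maps x ↦ b·x + a of ℤ/ℓℤ) acts by precomposition with the inverse map and G acts by left multiplication of values, the stabilizer of every element lies in {1} × Γ. -/
/-- Let `ℓ` be a prime number and `G` a finite group whose order is not divisible by `ℓ`.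
Suppose `g ∈ G`, `a ∈ ℤ/ℓℤ`, `b ∈ (ℤ/ℓℤ)ˣ` and `f : ℤ/ℓℤ → G` satisfy
`g · f(x) = f(b·x + a)` for all `x ∈ ℤ/ℓℤ`.  Then `g = 1`.  (Equivalently, for the
action of `G × Γ` on `Maps(ℤ/ℓℤ, G)`, where `Γ` is the group of invertible affine
transformations of `ℤ/ℓℤ`, the stabilizer of every element lies in `{1} × Γ`.) -/
theorem affine_stabilizer_trivial (ℓ : ℕ) (hℓ : ℓ.Prime) (G : Type) [Group G] [Finite G]
    (hord : ¬ ℓ ∣ Nat.card G) (g : G) (a : ZMod ℓ) (b : (ZMod ℓ)ˣ) (f : ZMod ℓ → G)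
    (h : ∀ x : ZMod ℓ, g * f x = f ((b : ZMod ℓ) * x + a)) :
    g = 1 := by
  haveI := Fact.mk hℓ
  by_cases hb : (b : ZMod ℓ) = 1
  · -- b = 1 : iterate ℓ times to get g ^ ℓ = 1
    have key : ∀ n : ℕ, g ^ n * f 0 = f (n • a) := by
      intro n
      induction n with
      | zero => simp
      | succ n ih =>
        have hn := h (n • a)
        rw [hb, one_mul] at hn
        calc g ^ (n + 1) * f 0 = g * (g ^ n * f 0) := by
              rw [pow_succ']; rw [mul_assoc]
          _ = g * f (n • a) := by rw [ih]
          _ = f (n • a + a) := hn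
          _ = f ((n + 1) • a) := by rw [succ_nsmul]
    have hpow : g ^ ℓ = 1 := by
      have := key ℓ
      have hz : (ℓ : ℕ) • a = 0 := by
        simp [nsmul_eq_mul, ZMod.natCast_self]
      rw [hz] at this
      have : g ^ ℓ * f 0 = 1 * f 0 := by rw [one_mul, this]
      exact mul_right_cancel this
    have h1 : orderOf g ∣ ℓ := orderOf_dvd_of_pow_eq_one hpow
    have h2 : orderOf g ∣ Nat.card G := orderOf_dvd_natCard g
    rcases (Nat.Prime.eq_one_or_self_of_dvd hℓ _ h1) with h' | h'
    · exact orderOf_eq_one_iff.mp h'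
    · exact absurd (h' ▸ h2) hord
  · -- b ≠ 1 : fixed point x₀ = a / (1 - b)
    have hne : (1 : ZMod ℓ) - (b : ZMod ℓ) ≠ 0 := fun hc => hb (by
      have : (b : ZMod ℓ) = 1 := by linear_combination -hc
      exact this)
    set x₀ : ZMod ℓ := a / (1 - (b : ZMod ℓ)) with hx₀
    have hfix : (b : ZMod ℓ) * x₀ + a = x₀ := by
      rw [hx₀]; field_simp; ring
    have := h x₀
    rw [hfix] at this
    exact mul_eq_right.mp this
end

section
/- Let p be an odd prime and N ≥ 1 an integer. Then the set of prime numbers ℓ such that ℓ ≠ p, the image of ℓ in (ℤ/pℤ)ˣ generates (ℤ/pℤ)ˣ, and ℓ^{p-1} ≡ 1 (mod p^N), is infinite. -/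
/-- Let `p` be an odd prime and `N ≥ 1` an integer.  Then the set of prime numbers `ℓ`
such that `ℓ ≠ p`, the image of `ℓ` in `(ℤ/pℤ)ˣ` generates `(ℤ/pℤ)ˣ` (i.e. `ℓ mod p`
has multiplicative order `p - 1`), and `ℓ^(p-1) ≡ 1 (mod p^N)`, is infinite. -/
theorem infinite_primes_generating_and_congruent (p : ℕ) (hp : p.Prime) (hodd : Odd p)
    (N : ℕ) (hN : 1 ≤ N) :
    {ℓ : ℕ | ℓ.Prime ∧ ℓ ≠ p ∧ orderOf (ℓ : ZMod p) = p - 1 ∧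
      ℓ ^ (p - 1) ≡ 1 [MOD p ^ N]}.Infinite := by
  haveI : Fact p.Prime := ⟨hp⟩
  have hp2 : 2 ≤ p := hp.two_le
  have hpn : (0:ℕ) < p ^ N := pow_pos hp.pos N
  haveI : NeZero (p ^ N) := ⟨hpn.ne'⟩
  have hdvd : p ∣ p ^ N := dvd_pow_self p (by omega)
  -- generator of (ZMod p)ˣ
  obtain ⟨g, hg⟩ := IsCyclic.exists_generator (α := (ZMod p)ˣ)
  have hgord : orderOf g = p - 1 := by
    rw [orderOf_eq_card_of_forall_mem_zpowers hg, Nat.card_eq_fintype_card,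
      ZMod.card_units_eq_totient, Nat.totient_prime hp]
  -- lift to a unit mod p^N
  obtain ⟨u, hu⟩ := ZMod.unitsMap_surjective hdvd g
  set a : (ZMod (p ^ N))ˣ := u ^ (p ^ (N - 1)) with ha
  -- coprimality of p-1 and p^(N-1)
  have hcop : (p - 1).Coprime (p ^ (N - 1)) := by
    apply Nat.Coprime.pow_right
    rw [Nat.coprime_comm]
    exact hp.coprime_iff_not_dvd.mpr fun h => by
      have := Nat.le_of_dvd (by omega) h; omega
  -- order of the reduction of a is p - 1
  have hred : orderOf (ZMod.unitsMap hdvd a) = p - 1 := by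
    rw [ha, map_pow, hu]
    have : (orderOf g).Coprime (p ^ (N - 1)) := hgord ▸ hcop
    rw [this.orderOf_pow, hgord]
  -- a ^ (p - 1) = 1
  have hapow : a ^ (p - 1) = 1 := by
    rw [ha, ← pow_mul]
    have hcard : Fintype.card (ZMod (p ^ N))ˣ = p ^ (N - 1) * (p - 1) := by
      rw [ZMod.card_units_eq_totient, Nat.totient_prime_pow hp (by omega)]
    rw [← hcard, pow_card_eq_one]
  -- Dirichlet
  have hdir := Nat.infinite_setOfPred_prime_and_eq_mod (q := p ^ N) (a := (a : ZMod (p ^ N)))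
    a.isUnit
  refine hdir.mono ?_
  rintro ℓ ⟨hℓp, hℓa⟩
  have hℓne : ℓ ≠ p := by
    rintro rfl
    have h1 : IsUnit ((ℓ : ZMod (ℓ ^ N))) := hℓa ▸ a.isUnit
    rw [ZMod.isUnit_iff_coprime] at h1
    have h2 : ℓ ∣ Nat.gcd ℓ (ℓ ^ N) := Nat.dvd_gcd dvd_rfl (dvd_pow_self ℓ (by omega))
    rw [h1, Nat.dvd_one] at h2
    omega
  refine ⟨hℓp, hℓne, ?_, ?_⟩
  · -- order of ℓ mod p
    have h1 : (ℓ : ZMod p) = ((ZMod.unitsMap hdvd a : (ZMod p)ˣ) : ZMod p) := by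
      rw [ZMod.unitsMap_def, Units.coe_map, ← hℓa]
      simp [ZMod.castHom_apply]
    rw [h1, orderOf_units, hred]
  · -- congruence
    have h2 : ((ℓ ^ (p - 1) : ℕ) : ZMod (p ^ N)) = ((1 : ℕ) : ZMod (p ^ N)) := by
      push_cast
      rw [hℓa, ← Units.val_pow_eq_pow_val, hapow, Units.val_one]
    exact (ZMod.natCast_eq_natCast_iff _ _ _).mp h2
end
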